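/- Let m ≥ 1 and 0 ≤ D ≤ m − 1, and let e_{D+1},…,e_m be nonnegative integers with e_{D+1} + ⋯ + e_m = m − D such that for every j with D + 1 ≤ j ≤ m one has e_{D+1} + ⋯ + e_j ≤ j − D. Then the monomial x_{D+1}^{e_{D+1}} ⋯ x_m^{e_m} equals x_{D+1} x_{D+2} ⋯ x_m in Q_m. -/

import Mathlib

open MvPolynomial Finset
open Fin.NatCast

noncomputable section

/-- The defining ideal of `Q_m`: generated by `x_1^2` and `x_i^2 - x_{i-1} x_i` for `2 ≤ i ≤ m`
(variables are 1-based; `X ((i-1 : ℕ) : Fin m)` is `x_i`). -/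
def Qrel (m : ℕ) [NeZero m] : Ideal (MvPolynomial (Fin m) (ZMod 2)) :=
  Ideal.span ((fun i : ℕ =>
      X ((i - 1 : ℕ) : Fin m) ^ 2 -
        (if i = 1 then 0 else X ((i - 2 : ℕ) : Fin m) * X ((i - 1 : ℕ) : Fin m))) ''
    Set.Icc 1 m)

/-- The ring `Q_m`. -/
abbrev Qring (m : ℕ) [NeZero m] : Type :=
  MvPolynomial (Fin m) (ZMod 2) ⧸ Qrel m

/-- The image of `x_i` (1-based, for `1 ≤ i ≤ m`) in `Q_m`. -/
def xQ (m : ℕ) [NeZero m] (i : ℕ) : Qring m :=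
  Ideal.Quotient.mk (Qrel m) (X ((i - 1 : ℕ) : Fin m))

lemma xQ_rel (m : ℕ) [NeZero m] (j : ℕ) (h2 : 2 ≤ j) (hjm : j ≤ m) :
    xQ m j ^ 2 = xQ m (j - 1) * xQ m j := by
  unfold xQ
  rw [← map_pow, ← map_mul, Ideal.Quotient.eq]
  apply Ideal.subset_span
  refine ⟨j, ⟨by omega, hjm⟩, ?_⟩
  have h : (j - 1 - 1 : ℕ) = j - 2 := by omega
  simp only [if_neg (by omega : j ≠ 1), h]

lemma key (m : ℕ) [NeZero m] (hm : 1 ≤ m) (D : ℕ) (hD : D ≤ m - 1) :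
    ∀ n (e : ℕ → ℕ), (∑ i ∈ Finset.Icc (D + 1) m, i * e i = n) →
      (∑ i ∈ Finset.Icc (D + 1) m, e i = m - D) →
      (∀ j, D + 1 ≤ j → j ≤ m → ∑ i ∈ Finset.Icc (D + 1) j, e i ≤ j - D) →
      ∏ i ∈ Finset.Icc (D + 1) m, xQ m i ^ e i = ∏ i ∈ Finset.Icc (D + 1) m, xQ m i := by
  intro n
  induction n using Nat.strong_induction_on with
  | _ n ih =>
  intro e hn hsum hpartial
  by_cases hb : ∃ j ∈ Finset.Icc (D + 1) m, 2 ≤ e j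
  · obtain ⟨j, hjmem, hej⟩ := hb
    obtain ⟨hjD, hjm⟩ := Finset.mem_Icc.mp hjmem
    -- j ≥ D + 2
    have hjD2 : D + 2 ≤ j := by
      by_contra hc
      have hjeq : j = D + 1 := by omega
      have := hpartial (D + 1) le_rfl (by omega)
      rw [Finset.Icc_self, Finset.sum_singleton] at this
      rw [hjeq] at hej
      omega
    set e' : ℕ → ℕ :=
      Function.update (Function.update e j (e j - 1)) (j - 1) (e (j - 1) + 1) with he'
    have hne : (j - 1 : ℕ) ≠ j := by omega
    have he'j1 : e' (j - 1) = e (j - 1) + 1 := by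
      simp [he', Function.update_self]
    have he'j : e' j = e j - 1 := by
      simp [he', Function.update_of_ne (Ne.symm hne), Function.update_self]
    have he'other : ∀ i, i ≠ j - 1 → i ≠ j → e' i = e i := by
      intro i h1 h2
      simp [he', Function.update_of_ne h1, Function.update_of_ne h2]
    obtain ⟨c, hc⟩ : ∃ c, e j = c + 2 := ⟨e j - 2, by omega⟩
    -- general sum identity
    have key_sum : ∀ (w : ℕ → ℕ) (s : Finset ℕ), (j - 1) ∈ s → j ∈ s →
        ∑ i ∈ s, w i * e' i + w j = ∑ i ∈ s, w i * e i + w (j - 1) := by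
      intro w s h1 h2
      have h2' : j ∈ s.erase (j - 1) := Finset.mem_erase.mpr ⟨Ne.symm hne, h2⟩
      rw [← Finset.add_sum_erase s (fun i => w i * e' i) h1,
          ← Finset.add_sum_erase _ (fun i => w i * e' i) h2',
          ← Finset.add_sum_erase s (fun i => w i * e i) h1,
          ← Finset.add_sum_erase _ (fun i => w i * e i) h2']
      have hR : ∑ i ∈ (s.erase (j - 1)).erase j, w i * e' i
          = ∑ i ∈ (s.erase (j - 1)).erase j, w i * e i := by
        refine Finset.sum_congr rfl fun i hi => ?_
        have hi1 := Finset.ne_of_mem_erase hi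
        have hi2 := Finset.ne_of_mem_erase (Finset.mem_of_mem_erase hi)
        rw [he'other i hi2 hi1]
      rw [hR, he'j1, he'j, hc]
      have hc1 : (c + 2 - 1 : ℕ) = c + 1 := rfl
      rw [hc1]
      ring
    -- product identity
    have key_prod : ∏ i ∈ Finset.Icc (D + 1) m, xQ m i ^ e' i
        = ∏ i ∈ Finset.Icc (D + 1) m, xQ m i ^ e i := by
      have h1 : (j - 1) ∈ Finset.Icc (D + 1) m := Finset.mem_Icc.mpr ⟨by omega, by omega⟩
      have h2' : j ∈ (Finset.Icc (D + 1) m).erase (j - 1) :=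
        Finset.mem_erase.mpr ⟨Ne.symm hne, hjmem⟩
      rw [← Finset.mul_prod_erase _ (fun i => xQ m i ^ e' i) h1,
          ← Finset.mul_prod_erase _ (fun i => xQ m i ^ e' i) h2',
          ← Finset.mul_prod_erase _ (fun i => xQ m i ^ e i) h1,
          ← Finset.mul_prod_erase _ (fun i => xQ m i ^ e i) h2']
      have hR : ∑ i ∈ ((Finset.Icc (D + 1) m).erase (j - 1)).erase j, (0:ℕ) = 0 := by simp
      have hRp : ∏ i ∈ ((Finset.Icc (D + 1) m).erase (j - 1)).erase j, xQ m i ^ e' i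
          = ∏ i ∈ ((Finset.Icc (D + 1) m).erase (j - 1)).erase j, xQ m i ^ e i := by
        refine Finset.prod_congr rfl fun i hi => ?_
        have hi1 := Finset.ne_of_mem_erase hi
        have hi2 := Finset.ne_of_mem_erase (Finset.mem_of_mem_erase hi)
        rw [he'other i hi2 hi1]
      rw [hRp, he'j1, he'j, hc]
      have hc1 : (c + 2 - 1 : ℕ) = c + 1 := rfl
      rw [hc1]
      have hrel : xQ m j ^ 2 = xQ m (j - 1) * xQ m j := xQ_rel m j (by omega) hjm
      have hpow : xQ m j ^ (c + 2) = xQ m (j - 1) * xQ m j ^ (c + 1) := by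
        have : xQ m j ^ (c + 2) = xQ m j ^ c * xQ m j ^ 2 := by ring
        rw [this, hrel]; ring
      rw [hpow]; ring
    -- new hypotheses for e'
    have hsum' : ∑ i ∈ Finset.Icc (D + 1) m, e' i = m - D := by
      have h1 : (j - 1) ∈ Finset.Icc (D + 1) m := Finset.mem_Icc.mpr ⟨by omega, by omega⟩
      have := key_sum (fun _ => 1) (Finset.Icc (D + 1) m) h1 hjmem
      simp only [one_mul] at this
      omega
    have hn' : ∑ i ∈ Finset.Icc (D + 1) m, i * e' i = n - 1 ∧ 1 ≤ n := by
      have h1 : (j - 1) ∈ Finset.Icc (D + 1) m := Finset.mem_Icc.mpr ⟨by omega, by omega⟩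
      have := key_sum (fun i => i) (Finset.Icc (D + 1) m) h1 hjmem
      omega
    have hpartial' : ∀ k, D + 1 ≤ k → k ≤ m →
        ∑ i ∈ Finset.Icc (D + 1) k, e' i ≤ k - D := by
      intro k hk1 hk2
      rcases lt_trichotomy k (j - 1) with hk | hk | hk
      · have : ∑ i ∈ Finset.Icc (D + 1) k, e' i = ∑ i ∈ Finset.Icc (D + 1) k, e i := by
          refine Finset.sum_congr rfl fun i hi => ?_
          have := Finset.mem_Icc.mp hi
          exact he'other i (by omega) (by omega)
        rw [this]; exact hpartial k hk1 hk2
      · -- k = j - 1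
        subst hk
        have h1 : (j - 1) ∈ Finset.Icc (D + 1) (j - 1) := Finset.mem_Icc.mpr ⟨hk1, le_rfl⟩
        rw [← Finset.add_sum_erase _ e' h1]
        have hR : ∑ i ∈ (Finset.Icc (D + 1) (j - 1)).erase (j - 1), e' i
            = ∑ i ∈ (Finset.Icc (D + 1) (j - 1)).erase (j - 1), e i := by
          refine Finset.sum_congr rfl fun i hi => ?_
          have hi1 := Finset.ne_of_mem_erase hi
          have := Finset.mem_Icc.mp (Finset.mem_of_mem_erase hi)
          exact he'other i hi1 (by omega)
        rw [hR, he'j1]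
        have hsplit : ∑ i ∈ Finset.Icc (D + 1) j, e i
            = ∑ i ∈ Finset.Icc (D + 1) (j - 1), e i + e j := by
          have hj1 : j = (j - 1) + 1 := by omega
          rw [hj1, Finset.sum_Icc_succ_top (by omega : D + 1 ≤ j - 1 + 1)]
          rw [← hj1]
        have hpj := hpartial j (by omega) hjm
        rw [hsplit] at hpj
        have hsum_erase : ∑ i ∈ Finset.Icc (D + 1) (j - 1), e i
            = e (j - 1) + ∑ i ∈ (Finset.Icc (D + 1) (j - 1)).erase (j - 1), e i := by
          rw [Finset.add_sum_erase _ e h1]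
        omega
      · -- k ≥ j
        have h1 : (j - 1) ∈ Finset.Icc (D + 1) k := Finset.mem_Icc.mpr ⟨by omega, by omega⟩
        have h2 : j ∈ Finset.Icc (D + 1) k := Finset.mem_Icc.mpr ⟨by omega, by omega⟩
        have := key_sum (fun _ => 1) (Finset.Icc (D + 1) k) h1 h2
        simp only [one_mul] at this
        have := hpartial k hk1 hk2
        omega
    rw [← key_prod]
    exact ih (n - 1) (by omega) e' hn'.1 hsum' hpartial'
  · -- all e i ≤ 1; combined with total sum = card, all e i = 1
    push_neg at hb
    have hcard : (Finset.Icc (D + 1) m).card = m - D := by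
      rw [Nat.card_Icc]; omega
    have hall : ∀ i ∈ Finset.Icc (D + 1) m, e i = 1 := by
      intro i hi
      by_contra hne
      have hi0 : e i = 0 := by have := hb i hi; omega
      have h1 : ∑ x ∈ Finset.Icc (D + 1) m, e x
          = ∑ x ∈ (Finset.Icc (D + 1) m).erase i, e x := by
        rw [← Finset.add_sum_erase _ e hi, hi0, zero_add]
      have h2 : ∑ x ∈ (Finset.Icc (D + 1) m).erase i, e x
          ≤ ((Finset.Icc (D + 1) m).erase i).card := by
        calc ∑ x ∈ (Finset.Icc (D + 1) m).erase i, e x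
            ≤ ∑ x ∈ (Finset.Icc (D + 1) m).erase i, 1 :=
              Finset.sum_le_sum fun x hx => by have := hb x (Finset.mem_of_mem_erase hx); omega
          _ = ((Finset.Icc (D + 1) m).erase i).card := by simp
      have h3 : ((Finset.Icc (D + 1) m).erase i).card = (Finset.Icc (D + 1) m).card - 1 :=
        Finset.card_erase_of_mem hi
      have hDm : D + 1 ≤ m := by omega
      omega
    refine Finset.prod_congr rfl fun i hi => ?_
    rw [hall i hi, pow_one]

theorem statement9 (m : ℕ) [NeZero m] (hm : 1 ≤ m) (D : ℕ) (hD : D ≤ m - 1)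
    (e : ℕ → ℕ) (hsum : ∑ i ∈ Finset.Icc (D + 1) m, e i = m - D)
    (hpartial : ∀ j, D + 1 ≤ j → j ≤ m → ∑ i ∈ Finset.Icc (D + 1) j, e i ≤ j - D) :
    ∏ i ∈ Finset.Icc (D + 1) m, xQ m i ^ e i = ∏ i ∈ Finset.Icc (D + 1) m, xQ m i := by
  exact key m hm D hD _ e rfl hsum hpartial
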